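/- Let y be a von Mises–Fisher random vector on S_p with parameters (κ_y, μ_y) and let z be uniformly distributed on S_p, and let α ∈ (0,1)∪(1,∞). Then the Rényi divergence of order α of y from z equals d_α(y,z) = (ν/(α−1))·ln(2^{1−α}/(α·κ_y^{1−α})) + (α/(α−1))·ln(I_ν(ακ_y)/I_ν(κ_y)) − ln(I_ν(ακ_y)·Γ(ν+1)). -/

import Mathlib

open MeasureTheory Real
open scoped RealInnerProductSpace

/-- `ν = p/2 − 1`. -/
noncomputable def nuOf (p : ℕ) : ℝ := (p : ℝ) / 2 - 1

/-- The modified Bessel function of the first kind,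
`I_ν(z) = (z/2)^ν ∑_{k=0}^∞ (z/2)^{2k}/(k!·Γ(ν+k+1))`. -/
noncomputable def besselI (ν z : ℝ) : ℝ :=
  (z / 2) ^ ν * ∑' k : ℕ, (z / 2) ^ (2 * k) / (Nat.factorial k * Real.Gamma (ν + k + 1))

/-- The ratio of modified Bessel functions `r_ν(κ) = I_{ν+1}(κ)/I_ν(κ)`. -/
noncomputable def besselRatio (ν κ : ℝ) : ℝ := besselI (ν + 1) κ / besselI ν κ

/-- The standard surface measure on the unit sphere in `ℝ^p`. -/
noncomputable def sphereMeasure (p : ℕ) :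
    Measure (Metric.sphere (0 : EuclideanSpace ℝ (Fin p)) 1) :=
  (volume : Measure (EuclideanSpace ℝ (Fin p))).toSphere

/-- The von Mises–Fisher partition function `C_ν(κ) = (2π)^{ν+1} I_ν(κ)/κ^ν`. -/
noncomputable def vmfC (ν κ : ℝ) : ℝ := (2 * Real.pi) ^ (ν + 1) * besselI ν κ / κ ^ ν

/-- The von Mises–Fisher density `f_p(x;κ,μ) = exp(κ⟨μ,x⟩)/C_ν(κ)`. -/
noncomputable def vmf (p : ℕ) (κ : ℝ) (μ x : EuclideanSpace ℝ (Fin p)) : ℝ :=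
  Real.exp (κ * ⟪μ, x⟫) / vmfC (nuOf p) κ

/-- The uniform density on the unit sphere in `ℝ^p`, `u(x) = Γ(ν+1)/(2π^{ν+1})`. -/
noncomputable def uniformDensity (p : ℕ) : ℝ :=
  Real.Gamma (nuOf p + 1) / (2 * Real.pi ^ (nuOf p + 1))

/-- The Rényi divergence of order `α` of `f_p(·;κ_y,μ_y)` from the uniform
distribution on the sphere. -/
noncomputable def renyiDivUniform (p : ℕ) (α κy : ℝ) (μy : EuclideanSpace ℝ (Fin p)) : ℝ :=
  (1 / (α - 1)) * Real.log (∫ x : Metric.sphere (0 : EuclideanSpace ℝ (Fin p)) 1,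
      vmf p κy μy (x : EuclideanSpace ℝ (Fin p)) ^ α
        * uniformDensity p ^ (1 - α) ∂(sphereMeasure p))


open Set Metric MeasureTheory.Measure

local notation "E" p => EuclideanSpace ℝ (Fin p)

lemma gamma_nat_add_half (k : ℕ) :
    Real.Gamma (k + 1/2) = Real.sqrt π * (2*k).factorial / (4^k * k.factorial) := by
  induction k with
  | zero => simpa using Real.Gamma_one_half_eq
  | succ k ih =>
    have h : ((k+1:ℕ):ℝ) + 1/2 = ((k:ℝ) + 1/2) + 1 := by push_cast; ring
    have hk : ((k:ℝ) + 1/2) ≠ 0 := by positivity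
    rw [h, Real.Gamma_add_one hk, ih]
    have h2 : ((2*(k+1)).factorial : ℝ) = (2*(k:ℝ)+2) * ((2*(k:ℝ)+1) * (2*k).factorial) := by
      rw [show 2*(k+1) = (2*k+1)+1 by ring, Nat.factorial_succ, Nat.factorial_succ]
      push_cast; ring
    have h3 : (((k+1:ℕ)).factorial : ℝ) = ((k:ℝ)+1) * k.factorial := by
      rw [Nat.factorial_succ]; push_cast; ring
    have hf : (0:ℝ) < k.factorial := by exact_mod_cast k.factorial_pos
    have h4 : (0:ℝ) < 4^k := by positivity
    rw [h2, h3]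
    field_simp
    ring

lemma gamma_ge {ν : ℝ} (hν : 0 ≤ ν) (k : ℕ) : Real.Gamma (ν+1) ≤ Real.Gamma (ν + k + 1) := by
  induction k with
  | zero => simp
  | succ k ih =>
    have hpos : (0:ℝ) < ν + k + 1 := by positivity
    have h1 : ν + ((k+1:ℕ):ℝ) + 1 = (ν + k + 1) + 1 := by push_cast; ring
    have h2 : Real.Gamma ((ν + k + 1) + 1) = (ν + k + 1) * Real.Gamma (ν + k + 1) :=
      Real.Gamma_add_one (ne_of_gt hpos)
    rw [h1, h2]
    have hG := Real.Gamma_pos_of_pos hpos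
    have hk : (0:ℝ) ≤ (k:ℝ) := Nat.cast_nonneg k
    nlinarith

lemma gamma_pos_nu {ν : ℝ} (hν : 0 ≤ ν) (k : ℕ) : 0 < Real.Gamma (ν + k + 1) :=
  Real.Gamma_pos_of_pos (by positivity)

set_option maxHeartbeats 1000000 in
lemma summable_bessel {ν : ℝ} (hν : 0 ≤ ν) (z : ℝ) :
    Summable (fun k : ℕ => (z/2) ^ (2*k) / (k.factorial * Real.Gamma (ν + k + 1))) := by
  have hG := Real.Gamma_pos_of_pos (show (0:ℝ) < ν + 1 by positivity)
  apply Summable.of_nonneg_of_le (f := fun k : ℕ => ((z/2)^2)^k / k.factorial * (Real.Gamma (ν+1))⁻¹)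
  · intro k
    have h3 := gamma_pos_nu hν k
    have hf : (0:ℝ) < k.factorial := by exact_mod_cast k.factorial_pos
    have hnum : (0:ℝ) ≤ (z/2)^(2*k) := by rw [pow_mul]; positivity
    exact div_nonneg hnum (by positivity)
  · intro k
    have h2 := gamma_ge hν k
    have h3 := gamma_pos_nu hν k
    have hf : (0:ℝ) < k.factorial := by exact_mod_cast k.factorial_pos
    calc (z/2)^(2*k) / (k.factorial * Real.Gamma (ν + k + 1))
        = ((z/2)^2)^k / (k.factorial * Real.Gamma (ν + k + 1)) := by rw [pow_mul]
      _ ≤ ((z/2)^2)^k / (k.factorial * Real.Gamma (ν + 1)) := by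
          apply div_le_div_of_nonneg_left (by positivity) (by positivity)
          exact mul_le_mul_of_nonneg_left h2 hf.le
      _ = ((z/2)^2)^k / k.factorial * (Real.Gamma (ν+1))⁻¹ := by
          rw [← div_div, div_eq_mul_inv]
  · exact (Real.summable_pow_div_factorial ((z/2)^2)).mul_right _

lemma bessel_tsum_pos {ν : ℝ} (hν : 0 ≤ ν) (z : ℝ) :
    0 < ∑' k : ℕ, (z/2) ^ (2*k) / (k.factorial * Real.Gamma (ν + k + 1)) := by
  have hterm : ∀ k : ℕ, 0 ≤ (z/2) ^ (2*k) / (k.factorial * Real.Gamma (ν + k + 1)) := by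
    intro k
    have h3 := gamma_pos_nu hν k
    have hf : (0:ℝ) < k.factorial := by exact_mod_cast k.factorial_pos
    have hnum : (0:ℝ) ≤ (z/2)^(2*k) := by rw [pow_mul]; positivity
    exact div_nonneg hnum (by positivity)
  have h0 : 0 < (z/2) ^ (2*0) / ((Nat.factorial 0 : ℝ) * Real.Gamma (ν + (0:ℕ) + 1)) := by
    have h3 : 0 < Real.Gamma (ν + (0:ℕ) + 1) := gamma_pos_nu hν 0
    have h4 : ((z/2:ℝ)) ^ (2*0) = 1 := by norm_num
    rw [h4]
    simp only [Nat.factorial_zero, Nat.cast_one, one_mul]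
    exact one_div_pos.mpr h3
  exact Summable.tsum_pos (summable_bessel hν z) hterm 0 h0

lemma besselI_pos {ν z : ℝ} (hν : 0 ≤ ν) (hz : 0 < z) : 0 < besselI ν z := by
  have h1 : (0:ℝ) < (z/2) ^ ν := Real.rpow_pos_of_pos (by linarith) _
  exact mul_pos h1 (bessel_tsum_pos hν z)

lemma polar_eq (p : ℕ) (hp : 0 < p) (f : EuclideanSpace ℝ (Fin p) → ℝ) :
    ∫ x : EuclideanSpace ℝ (Fin p), f x
      = ∫ z : (sphere (0 : EuclideanSpace ℝ (Fin p)) 1 × Ioi (0:ℝ)),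
          f ((z.2 : ℝ) • (z.1 : EuclideanSpace ℝ (Fin p)))
        ∂(((volume : Measure (EuclideanSpace ℝ (Fin p))).toSphere).prod
            (Measure.volumeIoiPow (p - 1))) := by
  haveI : Nonempty (Fin p) := Fin.pos_iff_nonempty.mp hp
  haveI : Nontrivial (EuclideanSpace ℝ (Fin p)) := inferInstance
  have hdim : Module.finrank ℝ (EuclideanSpace ℝ (Fin p)) = p := finrank_euclideanSpace_fin
  calc ∫ x : EuclideanSpace ℝ (Fin p), f x
      = ∫ x : ({(0 : EuclideanSpace ℝ (Fin p))}ᶜ : Set (EuclideanSpace ℝ (Fin p))), f x.1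
          ∂((volume : Measure (EuclideanSpace ℝ (Fin p))).comap (↑)) := by
        rw [integral_subtype_comap (measurableSet_singleton _).compl fun x ↦ f x,
          restrict_compl_singleton]
    _ = ∫ z : (sphere (0 : EuclideanSpace ℝ (Fin p)) 1 × Ioi (0:ℝ)),
          f ((z.2 : ℝ) • (z.1 : EuclideanSpace ℝ (Fin p)))
        ∂(((volume : Measure (EuclideanSpace ℝ (Fin p))).toSphere).prod
            (Measure.volumeIoiPow (Module.finrank ℝ (EuclideanSpace ℝ (Fin p)) - 1))) := by
        rw [← (volume : Measure (EuclideanSpace ℝ (Fin p)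
          )).measurePreserving_homeomorphUnitSphereProd.integral_comp
          (Homeomorph.measurableEmbedding _)
          (fun z : (sphere (0 : EuclideanSpace ℝ (Fin p)) 1 × Ioi (0:ℝ)) =>
            f ((z.2 : ℝ) • (z.1 : EuclideanSpace ℝ (Fin p))))]
        refine integral_congr_ae (Filter.Eventually.of_forall fun x => ?_)
        simp only [homeomorphUnitSphereProd_apply_fst_coe, homeomorphUnitSphereProd_apply_snd_coe]
        congr 1
        exact (smul_inv_smul₀ (norm_ne_zero_iff.2 x.2) x.1).symm
    _ = _ := by rw [hdim]

lemma radial_Ioi (n : ℕ) :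
    ∫ r in Ioi (0:ℝ), r ^ n * Real.exp (-r^2) = (1/2) * Real.Gamma ((n+1)/2) := by
  have h := integral_rpow_mul_exp_neg_rpow (p := 2) (q := (n:ℝ)) two_pos
    (lt_of_lt_of_le neg_one_lt_zero (Nat.cast_nonneg n))
  calc ∫ r in Ioi (0:ℝ), r ^ n * Real.exp (-r^2)
      = ∫ r in Ioi (0:ℝ), r ^ (n:ℝ) * Real.exp (-r ^ (2:ℝ)) := by
        refine setIntegral_congr_fun measurableSet_Ioi (fun x hx => ?_)
        rw [Real.rpow_natCast, Real.rpow_two]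
    _ = (1/2) * Real.Gamma ((n+1)/2) := by rw [h]

lemma radial_density (n m : ℕ) :
    ∫ r : (Ioi (0:ℝ)), ((r:ℝ) ^ n * Real.exp (-(r:ℝ)^2)) ∂(Measure.volumeIoiPow m)
      = (1/2) * Real.Gamma ((n+m+1)/2) := by
  simp only [Measure.volumeIoiPow, ENNReal.ofReal]
  rw [integral_withDensity_eq_integral_smul
    ((measurable_subtype_coe.pow_const _).real_toNNReal),
    integral_subtype_comap (μ := (volume : Measure ℝ)) measurableSet_Ioi
      (fun r : ℝ => (r ^ m).toNNReal • (r ^ n * Real.exp (-r^2)))]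
  calc ∫ r in Ioi (0:ℝ), (r ^ m).toNNReal • (r ^ n * Real.exp (-r^2))
      = ∫ r in Ioi (0:ℝ), r ^ (n+m) * Real.exp (-r^2) := by
        refine setIntegral_congr_fun measurableSet_Ioi (fun x hx => ?_)
        rw [NNReal.smul_def, Real.coe_toNNReal _ (pow_nonneg (le_of_lt hx) _)]
        rw [smul_eq_mul, pow_add]; ring
    _ = (1/2) * Real.Gamma ((n+m+1)/2) := by rw [radial_Ioi (n+m)]; push_cast; ring

lemma gaussian_one : ∫ x : ℝ, Real.exp (-x^2) = Real.sqrt π := by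
  simpa using integral_gaussian 1

lemma gaussian_moment_even (k : ℕ) :
    ∫ x : ℝ, x ^ (2*k) * Real.exp (-x^2) = Real.Gamma (k + 1/2) := by
  have habs : ∀ x : ℝ, |x| ^ (2*k) * Real.exp (-|x|^2) = x ^ (2*k) * Real.exp (-x^2) := by
    intro x
    rw [show |x| ^ (2*k) = x ^ (2*k) from (even_two_mul k).pow_abs x, sq_abs]
  calc ∫ x : ℝ, x ^ (2*k) * Real.exp (-x^2)
      = ∫ x : ℝ, |x| ^ (2*k) * Real.exp (-|x|^2) := by
        refine integral_congr_ae (Filter.Eventually.of_forall fun x => (habs x).symm)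
    _ = 2 * ∫ x in Ioi (0:ℝ), x ^ (2*k) * Real.exp (-x^2) :=
        integral_comp_abs (f := fun x => x ^ (2*k) * Real.exp (-x^2))
    _ = Real.Gamma (k + 1/2) := by
        rw [radial_Ioi (2*k), show (((2*k:ℕ):ℝ)+1)/2 = (k:ℝ)+1/2 by push_cast; ring]
        ring

lemma euclid_norm_sq (p : ℕ) (y : EuclideanSpace ℝ (Fin p)) :
    ‖y‖ ^ 2 = ∑ i, (y i) ^ 2 := by
  rw [EuclideanSpace.norm_eq, Real.sq_sqrt (by positivity)]
  simp [sq_abs]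

lemma gaussian_factor (p : ℕ) (hp : 0 < p) (i₀ : Fin p) (n : ℕ) :
    ∫ y : EuclideanSpace ℝ (Fin p), (y i₀) ^ n * Real.exp (-‖y‖^2)
      = (∫ x : ℝ, x ^ n * Real.exp (-x^2)) * (Real.sqrt π) ^ (p - 1) := by
  have e1 : ∫ y : EuclideanSpace ℝ (Fin p), (y i₀) ^ n * Real.exp (-‖y‖^2)
      = ∫ z : Fin p → ℝ, (z i₀) ^ n * Real.exp (-∑ i, (z i)^2) := by
    rw [← (EuclideanSpace.volume_preserving_symm_measurableEquiv_toLp (Fin p)).integral_comp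
      (MeasurableEquiv.toLp 2 (Fin p → ℝ)).symm.measurableEmbedding
      (fun z : Fin p → ℝ => (z i₀) ^ n * Real.exp (-∑ i, (z i)^2))]
    refine integral_congr_ae (Filter.Eventually.of_forall fun y => ?_)
    show y i₀ ^ n * Real.exp (-‖y‖^2) = y i₀ ^ n * Real.exp (-∑ i, (y i)^2)
    rw [euclid_norm_sq]
  rw [e1]
  have e2 : ∀ z : Fin p → ℝ, (z i₀) ^ n * Real.exp (-∑ i, (z i)^2)
      = ∏ i, ((if i = i₀ then (z i) ^ n else 1) * Real.exp (-(z i)^2)) := by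
    intro z
    rw [Finset.prod_mul_distrib, Finset.prod_ite_eq']
    simp only [Finset.mem_univ, if_true]
    rw [← Real.exp_sum]
    congr 1
    rw [← Finset.sum_neg_distrib]
  simp_rw [e2]
  rw [MeasureTheory.integral_fintype_prod_volume_eq_prod (ι := Fin p)
    (f := fun i t => (if i = i₀ then t ^ n else 1) * Real.exp (-t^2))]
  have hfac : ∀ i : Fin p, (∫ t : ℝ, (if i = i₀ then t ^ n else 1) * Real.exp (-t^2))
      = if i = i₀ then (∫ x : ℝ, x ^ n * Real.exp (-x^2)) else Real.sqrt π := by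
    intro i
    by_cases h : i = i₀ <;> simp [h, gaussian_one]
  simp_rw [hfac]
  rw [← Finset.mul_prod_erase Finset.univ _ (Finset.mem_univ i₀), if_pos rfl]
  congr 1
  rw [Finset.prod_congr rfl (fun i hi => if_neg (Finset.ne_of_mem_erase hi)),
    Finset.prod_const, Finset.card_erase_of_mem (Finset.mem_univ i₀),
    Finset.card_univ, Fintype.card_fin]

lemma moment_eq (p : ℕ) (hp : 0 < p) (μ : EuclideanSpace ℝ (Fin p)) (hμ : ‖μ‖ = 1) (n : ℕ) :
    (∫ ω : sphere (0 : EuclideanSpace ℝ (Fin p)) 1,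
        ⟪μ, (ω : EuclideanSpace ℝ (Fin p))⟫ ^ n
        ∂((volume : Measure (EuclideanSpace ℝ (Fin p))).toSphere))
      * ((1/2) * Real.Gamma ((n+p)/2))
    = (∫ x : ℝ, x ^ n * Real.exp (-x^2)) * (Real.sqrt π) ^ (p - 1) := by
  -- orthonormal basis with b i₀ = μ
  set i₀ : Fin p := ⟨0, hp⟩
  have hcard : Module.finrank ℝ (EuclideanSpace ℝ (Fin p)) = Fintype.card (Fin p) := by
    rw [finrank_euclideanSpace_fin, Fintype.card_fin]
  have horth : Orthonormal ℝ (({i₀} : Set (Fin p)).restrict (fun _ : Fin p => μ)) := by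
    constructor
    · intro i
      exact hμ
    · intro i j hij
      exact absurd (Subtype.ext (by
        have hi := i.2; have hj := j.2
        simp only [Set.mem_singleton_iff] at hi hj
        rw [hi, hj])) hij
  obtain ⟨b, hb⟩ := horth.exists_orthonormalBasis_extension_of_card_eq hcard
  have hbμ : b i₀ = μ := hb i₀ rfl
  -- compute the Gaussian integral in two ways
  have key : ∫ x : EuclideanSpace ℝ (Fin p), ⟪μ, x⟫ ^ n * Real.exp (-‖x‖^2)
      = (∫ x : ℝ, x ^ n * Real.exp (-x^2)) * (Real.sqrt π) ^ (p - 1) := by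
    rw [← (b.measurePreserving_repr_symm).integral_comp
      (b.repr.symm.toHomeomorph.measurableEmbedding)
      (fun x : EuclideanSpace ℝ (Fin p) => ⟪μ, x⟫ ^ n * Real.exp (-‖x‖^2))]
    have : ∀ y : EuclideanSpace ℝ (Fin p),
        ⟪μ, b.repr.symm y⟫ ^ n * Real.exp (-‖b.repr.symm y‖^2)
          = (y i₀) ^ n * Real.exp (-‖y‖^2) := by
      intro y
      rw [← hbμ, ← b.repr_apply_apply, LinearIsometryEquiv.apply_symm_apply,
        LinearIsometryEquiv.norm_map]
    simp_rw [this]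
    exact gaussian_factor p hp i₀ n
  rw [← key, polar_eq p hp (fun x => ⟪μ, x⟫ ^ n * Real.exp (-‖x‖^2))]
  have e3 : ∀ z : (sphere (0 : EuclideanSpace ℝ (Fin p)) 1 × Ioi (0:ℝ)),
      ⟪μ, (z.2 : ℝ) • (z.1 : EuclideanSpace ℝ (Fin p))⟫ ^ n
          * Real.exp (-‖(z.2 : ℝ) • (z.1 : EuclideanSpace ℝ (Fin p))‖^2)
        = (⟪μ, (z.1 : EuclideanSpace ℝ (Fin p))⟫ ^ n)
          * ((z.2 : ℝ) ^ n * Real.exp (-(z.2 : ℝ)^2)) := by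
    rintro ⟨ω, r⟩
    have hω : ‖(ω : EuclideanSpace ℝ (Fin p))‖ = 1 := by
      simpa [mem_sphere_zero_iff_norm] using ω.2
    have hr : (0:ℝ) < (r : ℝ) := r.2
    rw [real_inner_smul_right, norm_smul, hω, Real.norm_eq_abs, abs_of_pos hr, mul_one, mul_pow]
    ring
  simp_rw [e3]
  rw [MeasureTheory.integral_prod_mul
    (f := fun ω : sphere (0 : EuclideanSpace ℝ (Fin p)) 1
      => ⟪μ, (ω : EuclideanSpace ℝ (Fin p))⟫ ^ n)
    (g := fun r : Ioi (0:ℝ) => (r : ℝ) ^ n * Real.exp (-(r : ℝ)^2))]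
  rw [radial_density n (p-1)]
  congr 2
  have : ((p - 1 : ℕ) : ℝ) = (p : ℝ) - 1 := by
    rw [Nat.cast_sub hp]; norm_num
  rw [this]
  ring

lemma gaussian_moment_odd (k : ℕ) :
    ∫ x : ℝ, x ^ (2*k+1) * Real.exp (-x^2) = 0 := by
  have h : ∀ x : ℝ, (-x) ^ (2*k+1) * Real.exp (-(-x)^2) = -(x ^ (2*k+1) * Real.exp (-x^2)) := by
    intro x
    rw [Odd.neg_pow ⟨k, by ring⟩, neg_sq]
    ring
  have h2 : ∫ x : ℝ, x ^ (2*k+1) * Real.exp (-x^2)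
      = ∫ x : ℝ, -(x ^ (2*k+1) * Real.exp (-x^2)) := by
    conv_lhs => rw [← integral_neg_eq_self (fun x : ℝ => x ^ (2*k+1) * Real.exp (-x^2)) volume]
    exact integral_congr_ae (Filter.Eventually.of_forall h)
  rw [integral_neg] at h2
  linarith

set_option maxHeartbeats 1000000 in
theorem sphere_integral_exp (p : ℕ) (hp : 2 ≤ p) (μ : EuclideanSpace ℝ (Fin p))
    (hμ : ‖μ‖ = 1) (c : ℝ) (hc : 0 < c) :
    ∫ ω : sphere (0 : EuclideanSpace ℝ (Fin p)) 1,
        Real.exp (c * ⟪μ, (ω : EuclideanSpace ℝ (Fin p))⟫)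
        ∂((volume : Measure (EuclideanSpace ℝ (Fin p))).toSphere)
      = vmfC (nuOf p) c := by
  have hp0 : 0 < p := by omega
  set ν : ℝ := nuOf p with hν
  have hν0 : 0 ≤ ν := by
    rw [hν]; unfold nuOf
    have : (2:ℝ) ≤ p := by exact_mod_cast hp
    linarith
  set σ := ((volume : Measure (EuclideanSpace ℝ (Fin p))).toSphere) with hσ
  set M : ℕ → ℝ := fun n => ∫ ω : sphere (0 : EuclideanSpace ℝ (Fin p)) 1,
      ⟪μ, (ω : EuclideanSpace ℝ (Fin p))⟫ ^ n ∂σ with hM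
  -- inner products are bounded by 1
  have hinner : ∀ ω : sphere (0 : EuclideanSpace ℝ (Fin p)) 1,
      |⟪μ, (ω : EuclideanSpace ℝ (Fin p))⟫| ≤ 1 := by
    intro ω
    have hω : ‖(ω : EuclideanSpace ℝ (Fin p))‖ = 1 := by
      simpa [mem_sphere_zero_iff_norm] using ω.2
    calc |⟪μ, (ω : EuclideanSpace ℝ (Fin p))⟫| ≤ ‖μ‖ * ‖(ω : EuclideanSpace ℝ (Fin p))‖ :=
        abs_real_inner_le_norm _ _
      _ = 1 := by rw [hμ, hω, one_mul]
  -- the Gamma values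
  have hGamma : ∀ n : ℕ, (0:ℝ) < (1/2) * Real.Gamma ((n+p)/2) := by
    intro n
    have := Real.Gamma_pos_of_pos (show (0:ℝ) < ((n:ℝ)+p)/2 by positivity)
    linarith
  -- moments
  have hModd : ∀ k : ℕ, M (2*k+1) = 0 := by
    intro k
    have h := moment_eq p hp0 μ hμ (2*k+1)
    rw [gaussian_moment_odd, zero_mul] at h
    have := (hGamma (2*k+1)).ne'
    rcases mul_eq_zero.mp h with h1 | h1
    · exact h1
    · exact absurd h1 this
  have hMeven : ∀ k : ℕ, M (2*k)
      = Real.Gamma (k + 1/2) * Real.sqrt π ^ (p-1)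
        / ((1/2) * Real.Gamma ((((2*k:ℕ):ℝ)+p)/2)) := by
    intro k
    have h := moment_eq p hp0 μ hμ (2*k)
    rw [gaussian_moment_even] at h
    exact (eq_div_iff (hGamma (2*k)).ne').mpr h
  -- series exchange
  have hexp : ∀ ω : sphere (0 : EuclideanSpace ℝ (Fin p)) 1,
      Real.exp (c * ⟪μ, (ω : EuclideanSpace ℝ (Fin p))⟫)
        = ∑' n : ℕ, (c * ⟪μ, (ω : EuclideanSpace ℝ (Fin p))⟫) ^ n / n.factorial := by
    intro ω
    rw [Real.exp_eq_exp_ℝ, NormedSpace.exp_eq_tsum_div]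
  have hmeas : ∀ n : ℕ, AEStronglyMeasurable
      (fun ω : sphere (0 : EuclideanSpace ℝ (Fin p)) 1 =>
        (c * ⟪μ, (ω : EuclideanSpace ℝ (Fin p))⟫) ^ n / n.factorial) σ := by
    intro n
    apply Continuous.aestronglyMeasurable
    have hcont : Continuous (fun ω : sphere (0 : EuclideanSpace ℝ (Fin p)) 1 =>
        ⟪μ, (ω : EuclideanSpace ℝ (Fin p))⟫) :=
      (continuous_const.inner continuous_subtype_val)
    continuity
  have hswap : ∫ ω : sphere (0 : EuclideanSpace ℝ (Fin p)) 1,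
      Real.exp (c * ⟪μ, (ω : EuclideanSpace ℝ (Fin p))⟫) ∂σ
      = ∑' n : ℕ, ∫ ω : sphere (0 : EuclideanSpace ℝ (Fin p)) 1,
          (c * ⟪μ, (ω : EuclideanSpace ℝ (Fin p))⟫) ^ n / n.factorial ∂σ := by
    rw [show (fun ω : sphere (0 : EuclideanSpace ℝ (Fin p)) 1 =>
        Real.exp (c * ⟪μ, (ω : EuclideanSpace ℝ (Fin p))⟫))
      = fun ω : sphere (0 : EuclideanSpace ℝ (Fin p)) 1 =>
        ∑' n : ℕ, (c * ⟪μ, (ω : EuclideanSpace ℝ (Fin p))⟫) ^ n / n.factorial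
      from funext hexp]
    apply integral_tsum hmeas
    have hbound : ∀ n : ℕ, ∫⁻ ω : sphere (0 : EuclideanSpace ℝ (Fin p)) 1,
        ‖(c * ⟪μ, (ω : EuclideanSpace ℝ (Fin p))⟫) ^ n / n.factorial‖₊ ∂σ
        ≤ ENNReal.ofReal (c ^ n / n.factorial) * σ univ := by
      intro n
      have hb : ∀ ω : sphere (0 : EuclideanSpace ℝ (Fin p)) 1,
          (‖(c * ⟪μ, (ω : EuclideanSpace ℝ (Fin p))⟫) ^ n / n.factorial‖₊ : ENNReal)
            ≤ ENNReal.ofReal (c ^ n / n.factorial) := by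
        intro ω
        rw [← enorm_eq_nnnorm, ← ofReal_norm]
        apply ENNReal.ofReal_le_ofReal
        rw [norm_div, norm_pow, norm_mul]
        have h1 : ‖⟪μ, (ω : EuclideanSpace ℝ (Fin p))⟫‖ ≤ 1 := hinner ω
        have h2 : ‖c‖ = c := abs_of_pos hc
        have hfac : (0:ℝ) < n.factorial := by exact_mod_cast n.factorial_pos
        rw [show ‖(n.factorial : ℝ)‖ = (n.factorial:ℝ) from abs_of_pos hfac]
        apply div_le_div_of_nonneg_right ?_ hfac.le |>.trans_eq rfl
        calc (‖c‖ * ‖⟪μ, (ω : EuclideanSpace ℝ (Fin p))⟫‖) ^ n ≤ (‖c‖ * 1) ^ n := by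
              apply pow_le_pow_left₀ (by positivity)
              exact mul_le_mul_of_nonneg_left h1 (norm_nonneg c)
          _ = c ^ n := by rw [mul_one, h2]
      calc ∫⁻ ω, ‖(c * ⟪μ, (ω : EuclideanSpace ℝ (Fin p))⟫) ^ n / n.factorial‖₊ ∂σ
          ≤ ∫⁻ _, ENNReal.ofReal (c ^ n / n.factorial) ∂σ := lintegral_mono hb
        _ = ENNReal.ofReal (c ^ n / n.factorial) * σ univ := by rw [lintegral_const]
    apply ne_of_lt
    calc ∑' n : ℕ, ∫⁻ ω, ‖(c * ⟪μ, (ω : EuclideanSpace ℝ (Fin p))⟫) ^ n / n.factorial‖₊ ∂σ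
        ≤ ∑' n : ℕ, ENNReal.ofReal (c ^ n / n.factorial) * σ univ := ENNReal.tsum_le_tsum hbound
      _ = (∑' n : ℕ, ENNReal.ofReal (c ^ n / n.factorial)) * σ univ := ENNReal.tsum_mul_right
      _ < ⊤ := by
          apply ENNReal.mul_lt_top _ (measure_lt_top σ univ)
          rw [← ENNReal.ofReal_tsum_of_nonneg (fun n => by positivity)
            (Real.summable_pow_div_factorial c)]
          exact ENNReal.ofReal_lt_top
  -- each integral
  have hterm : ∀ n : ℕ, ∫ ω : sphere (0 : EuclideanSpace ℝ (Fin p)) 1,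
      (c * ⟪μ, (ω : EuclideanSpace ℝ (Fin p))⟫) ^ n / n.factorial ∂σ
      = c ^ n / n.factorial * M n := by
    intro n
    rw [hM]
    rw [← integral_const_mul]
    refine integral_congr_ae (Filter.Eventually.of_forall fun ω => ?_)
    show (c * ⟪μ, (ω : EuclideanSpace ℝ (Fin p))⟫) ^ n / n.factorial
      = c ^ n / n.factorial * ⟪μ, (ω : EuclideanSpace ℝ (Fin p))⟫ ^ n
    rw [mul_pow]
    ring
  rw [hswap]
  simp_rw [hterm]
  -- split even and odd
  have hterm2k : ∀ k : ℕ, c ^ (2*k) / (2*k).factorial * M (2*k)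
      = (2 * π ^ (ν+1)) * ((c/2) ^ (2*k) / (k.factorial * Real.Gamma (ν + k + 1))) := by
    intro k
    rw [hMeven k, gamma_nat_add_half]
    have hG : Real.Gamma ((((2*k:ℕ):ℝ)+p)/2) = Real.Gamma (ν + k + 1) := by
      congr 1
      rw [hν]; unfold nuOf; push_cast; ring
    rw [hG]
    have hGpos := Real.Gamma_pos_of_pos (show (0:ℝ) < ν + k + 1 by positivity)
    have hfac : (0:ℝ) < (2*k).factorial := by exact_mod_cast (2*k).factorial_pos
    have hfack : (0:ℝ) < k.factorial := by exact_mod_cast k.factorial_pos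
    have hsq : Real.sqrt π ^ (p-1) * Real.sqrt π = π ^ (ν+1) := by
      have h1 : Real.sqrt π ^ (p-1) * Real.sqrt π = Real.sqrt π ^ p := by
        rw [← pow_succ, Nat.sub_add_cancel (by omega)]
      rw [h1, Real.sqrt_eq_rpow, ← Real.rpow_natCast (π ^ ((1:ℝ)/2)) p,
        ← Real.rpow_mul Real.pi_pos.le]
      rw [hν]; unfold nuOf
      congr 1
      ring
    have hc2 : (c/2) ^ (2*k) = c ^ (2*k) / 4 ^ k := by
      rw [div_pow, show ((2:ℝ))^(2*k) = 4^k by rw [pow_mul]; norm_num]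
    rw [hc2]
    field_simp
    rw [← hsq]
    ring
  have hsum_even : Summable (fun k : ℕ => c ^ (2*k) / (2*k).factorial * M (2*k)) := by
    rw [show (fun k : ℕ => c ^ (2*k) / (2*k).factorial * M (2*k))
      = fun k : ℕ => (2 * π ^ (ν+1)) * ((c/2) ^ (2*k) / (k.factorial * Real.Gamma (ν + k + 1)))
      from funext hterm2k]
    exact (summable_bessel hν0 c).mul_left _
  have hsum_odd : Summable (fun k : ℕ => c ^ (2*k+1) / (2*k+1).factorial * M (2*k+1)) := by
    rw [show (fun k : ℕ => c ^ (2*k+1) / (2*k+1).factorial * M (2*k+1))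
      = fun k => (0:ℝ) from funext fun k => by rw [hModd k, mul_zero]]
    exact summable_zero
  rw [← tsum_even_add_odd hsum_even hsum_odd]
  have hodd0 : ∑' k : ℕ, c ^ (2*k+1) / (2*k+1).factorial * M (2*k+1) = 0 := by
    rw [show (fun k : ℕ => c ^ (2*k+1) / (2*k+1).factorial * M (2*k+1))
      = fun k => (0:ℝ) from funext fun k => by rw [hModd k, mul_zero]]
    exact tsum_zero
  rw [hodd0, add_zero]
  simp_rw [hterm2k]
  rw [tsum_mul_left]
  -- identify with vmfC
  unfold vmfC besselI
  rw [hν]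
  have hrw : (2 * π) ^ (nuOf p + 1) * ((c/2) ^ (nuOf p) * ∑' k : ℕ,
        (c/2) ^ (2*k) / (k.factorial * Real.Gamma (nuOf p + k + 1))) / c ^ (nuOf p)
      = (2 * π ^ (nuOf p + 1)) * ∑' k : ℕ,
        (c/2) ^ (2*k) / (k.factorial * Real.Gamma (nuOf p + k + 1)) := by
    have h2π : (2 * π) ^ (nuOf p + 1) = 2 ^ (nuOf p + 1) * π ^ (nuOf p + 1) :=
      Real.mul_rpow (by norm_num) Real.pi_pos.le
    have hcd : (c/2) ^ (nuOf p) = c ^ (nuOf p) / 2 ^ (nuOf p) :=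
      Real.div_rpow hc.le (by norm_num : (0:ℝ) ≤ 2) _
    have hcpos : (0:ℝ) < c ^ (nuOf p) := Real.rpow_pos_of_pos hc _
    have h2pos : (0:ℝ) < (2:ℝ) ^ (nuOf p) := Real.rpow_pos_of_pos (by norm_num) _
    have h21 : (2:ℝ) ^ (nuOf p + 1) = 2 ^ (nuOf p) * 2 := by
      rw [Real.rpow_add (by norm_num), Real.rpow_one]
    rw [h2π, hcd, h21]
    field_simp
  rw [hrw]

/-- Rényi divergence of a von Mises–Fisher distribution from the uniform
distribution on the sphere. -/
theorem renyi_divergence_vmf_uniform (p : ℕ) (hp : 2 ≤ p) (α : ℝ) (hα : 0 < α) (hα1 : α ≠ 1)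
    (κy : ℝ) (hκy : 0 < κy)
    (μy : EuclideanSpace ℝ (Fin p)) (hμy : ‖μy‖ = 1) :
    renyiDivUniform p α κy μy
      = nuOf p / (α - 1) * Real.log (2 ^ (1 - α) / (α * κy ^ (1 - α)))
        + α / (α - 1) * Real.log (besselI (nuOf p) (α * κy) / besselI (nuOf p) κy)
        - Real.log (besselI (nuOf p) (α * κy) * Real.Gamma (nuOf p + 1)) := by
  have hν0 : 0 ≤ nuOf p := by
    unfold nuOf
    have : (2:ℝ) ≤ p := by exact_mod_cast hp
    linarith
  have hκα : 0 < α * κy := mul_pos hα hκy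
  have hB1 : 0 < besselI (nuOf p) (α * κy) := besselI_pos hν0 hκα
  have hB2 : 0 < besselI (nuOf p) κy := besselI_pos hν0 hκy
  have hG : 0 < Real.Gamma (nuOf p + 1) := Real.Gamma_pos_of_pos (by linarith)
  have h2π : (0:ℝ) < 2 * π := by positivity
  have hCκ : 0 < vmfC (nuOf p) κy := by
    unfold vmfC
    exact div_pos (mul_pos (Real.rpow_pos_of_pos h2π _) hB2) (Real.rpow_pos_of_pos hκy _)
  have hCα : 0 < vmfC (nuOf p) (α * κy) := by
    unfold vmfC
    exact div_pos (mul_pos (Real.rpow_pos_of_pos h2π _) hB1) (Real.rpow_pos_of_pos hκα _)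
  have hπν : (0:ℝ) < π ^ (nuOf p + 1) := Real.rpow_pos_of_pos Real.pi_pos _
  have hu : 0 < uniformDensity p := by
    unfold uniformDensity
    exact div_pos hG (by positivity)
  -- value of the integral
  have hptwise : ∀ ω : Metric.sphere (0 : EuclideanSpace ℝ (Fin p)) 1,
      vmf p κy μy (ω : EuclideanSpace ℝ (Fin p)) ^ α * uniformDensity p ^ (1 - α)
        = (uniformDensity p ^ (1 - α) / vmfC (nuOf p) κy ^ α)
          * Real.exp ((α * κy) * ⟪μy, (ω : EuclideanSpace ℝ (Fin p))⟫) := by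
    intro ω
    unfold vmf
    rw [Real.div_rpow (Real.exp_nonneg _) hCκ.le]
    rw [show (Real.exp (κy * ⟪μy, (ω : EuclideanSpace ℝ (Fin p))⟫)) ^ α
        = Real.exp ((α * κy) * ⟪μy, (ω : EuclideanSpace ℝ (Fin p))⟫) by
      rw [← Real.exp_mul]; congr 1; ring]
    ring
  have hint : ∫ x : Metric.sphere (0 : EuclideanSpace ℝ (Fin p)) 1,
      vmf p κy μy (x : EuclideanSpace ℝ (Fin p)) ^ α
        * uniformDensity p ^ (1 - α) ∂(sphereMeasure p)
      = (uniformDensity p ^ (1 - α) / vmfC (nuOf p) κy ^ α) * vmfC (nuOf p) (α * κy) := by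
    rw [integral_congr_ae (Filter.Eventually.of_forall hptwise)]
    unfold sphereMeasure
    rw [integral_const_mul]
    rw [sphere_integral_exp p hp μy hμy (α * κy) hκα]
  unfold renyiDivUniform
  rw [hint]
  -- logarithms
  have hα1' : α - 1 ≠ 0 := sub_ne_zero.mpr hα1
  have hlogu : Real.log (uniformDensity p)
      = Real.log (Real.Gamma (nuOf p + 1)) - (Real.log 2 + (nuOf p + 1) * Real.log π) := by
    unfold uniformDensity
    rw [Real.log_div hG.ne' (by positivity), Real.log_mul two_ne_zero hπν.ne',
      Real.log_rpow Real.pi_pos]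
  have hlog2π : Real.log (2 * π) = Real.log 2 + Real.log π :=
    Real.log_mul two_ne_zero Real.pi_ne_zero
  have hlogCκ : Real.log (vmfC (nuOf p) κy)
      = (nuOf p + 1) * (Real.log 2 + Real.log π) + Real.log (besselI (nuOf p) κy)
        - nuOf p * Real.log κy := by
    unfold vmfC
    rw [Real.log_div (mul_pos (Real.rpow_pos_of_pos h2π _) hB2).ne'
        (Real.rpow_pos_of_pos hκy _).ne',
      Real.log_mul (Real.rpow_pos_of_pos h2π _).ne' hB2.ne',
      Real.log_rpow h2π, Real.log_rpow hκy, hlog2π]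
  have hlogCα : Real.log (vmfC (nuOf p) (α * κy))
      = (nuOf p + 1) * (Real.log 2 + Real.log π) + Real.log (besselI (nuOf p) (α * κy))
        - nuOf p * (Real.log α + Real.log κy) := by
    unfold vmfC
    rw [Real.log_div (mul_pos (Real.rpow_pos_of_pos h2π _) hB1).ne'
        (Real.rpow_pos_of_pos hκα _).ne',
      Real.log_mul (Real.rpow_pos_of_pos h2π _).ne' hB1.ne',
      Real.log_rpow h2π, Real.log_rpow hκα, hlog2π, Real.log_mul hα.ne' hκy.ne']
  have hintlog : Real.log ((uniformDensity p ^ (1 - α) / vmfC (nuOf p) κy ^ α)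
        * vmfC (nuOf p) (α * κy))
      = (1 - α) * Real.log (uniformDensity p) - α * Real.log (vmfC (nuOf p) κy)
        + Real.log (vmfC (nuOf p) (α * κy)) := by
    rw [Real.log_mul (div_pos (Real.rpow_pos_of_pos hu _) (Real.rpow_pos_of_pos hCκ _)).ne'
        hCα.ne',
      Real.log_div (Real.rpow_pos_of_pos hu _).ne' (Real.rpow_pos_of_pos hCκ _).ne',
      Real.log_rpow hu, Real.log_rpow hCκ]
  have hlogR1 : Real.log ((2:ℝ) ^ (1-α) / (α * κy ^ (1-α)))
      = (1-α) * Real.log 2 - (Real.log α + (1-α) * Real.log κy) := by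
    rw [Real.log_div (Real.rpow_pos_of_pos two_pos _).ne'
        (mul_pos hα (Real.rpow_pos_of_pos hκy _)).ne',
      Real.log_mul hα.ne' (Real.rpow_pos_of_pos hκy _).ne',
      Real.log_rpow two_pos, Real.log_rpow hκy]
  have hlogR2 : Real.log (besselI (nuOf p) (α * κy) / besselI (nuOf p) κy)
      = Real.log (besselI (nuOf p) (α * κy)) - Real.log (besselI (nuOf p) κy) :=
    Real.log_div hB1.ne' hB2.ne'
  have hlogR3 : Real.log (besselI (nuOf p) (α * κy) * Real.Gamma (nuOf p + 1))
      = Real.log (besselI (nuOf p) (α * κy)) + Real.log (Real.Gamma (nuOf p + 1)) :=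
    Real.log_mul hB1.ne' hG.ne'
  rw [hintlog, hlogu, hlogCκ, hlogCα, hlogR1, hlogR2, hlogR3]
  field_simp
  ring
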